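/- Let f = (f_1,…,f_p) : (ℂ^n,0) → (ℂ^p,0) be a map-germ, let x^α be a monomial in the source variables x = (x_1,…,x_n) with α a nonzero multi-index, let k ≥ 1 be an integer, let q_1,…,q_{k−1} : (ℂ,0) → (ℂ,0) be function germs (so q_i(0) = 0), and let s_1,…,s_{k−1} : (ℂ^{p−1},0) → (ℂ,0) be function germs (so s_i(0) = 0). Define the one-parameter unfoldings F(x,λ) = ( f_1(x), …, f_{p−1}(x), f_p(x) + (1 + Σ_{i=1}^{k−1} q_i(λ)·s_i(f_1(x),…,f_{p−1}(x)))·λ·x^α, λ ) and G(x,Λ) = ( f_1(x), …, f_{p−1}(x), f_p(x) + Λ·x^α, Λ ). Then F and G are weak equivalent; more precisely, there exist weak germs of biholomorphism Φ of (ℂ^n×ℂ,0) and Ψ of (ℂ^p×ℂ,0) such that Ψ ∘ F ∘ Φ = G as germs. -/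

import Mathlib

open Filter Topology

noncomputable section

variable {E F : Type*}

/-- A map-germ at the origin: a holomorphic map defined near `0` sending `0` to `0`. -/
def IsMapGerm [NormedAddCommGroup E] [NormedSpace ℂ E]
    [NormedAddCommGroup F] [NormedSpace ℂ F] (f : E → F) : Prop :=
  AnalyticAt ℂ f 0 ∧ f 0 = 0

/-- A germ of biholomorphism of `(E,0)`: a map-germ whose derivative at `0` is invertible. -/
def IsBiholoGerm [NormedAddCommGroup E] [NormedSpace ℂ E] (h : E → E) : Prop :=
  IsMapGerm h ∧ ∃ e : E ≃L[ℂ] E, fderiv ℂ h 0 = (e : E →L[ℂ] E)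

/-- A weak germ of biholomorphism of `(E × ℂ, 0)`: a germ of biholomorphism whose last
component has the form `λ · u(x,λ)` with `u 0 ≠ 0`. -/
def IsWeakBiholoGerm [NormedAddCommGroup E] [NormedSpace ℂ E] (Φ : E × ℂ → E × ℂ) : Prop :=
  IsBiholoGerm Φ ∧ ∃ u : E × ℂ → ℂ, AnalyticAt ℂ u 0 ∧ u 0 ≠ 0 ∧
    ∀ᶠ w in 𝓝 0, (Φ w).2 = w.2 * u w

/-- The shear `w ↦ (w.1, w.2 * D w)` with `D 0 = 1` has derivative the identity at `0`. -/
lemma shear_hasFDerivAt [NormedAddCommGroup E] [NormedSpace ℂ E]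
    (D : E × ℂ → ℂ) (hD : AnalyticAt ℂ D 0) (hD0 : D 0 = 1) :
    HasFDerivAt (fun w : E × ℂ => (w.1, w.2 * D w))
      (ContinuousLinearMap.id ℂ (E × ℂ)) 0 := by
  have h1 : HasFDerivAt (fun w : E × ℂ => w.2) (ContinuousLinearMap.snd ℂ E ℂ) 0 :=
    (ContinuousLinearMap.snd ℂ E ℂ).hasFDerivAt
  have h2 := hD.differentiableAt.hasFDerivAt
  have hmul := h1.mul h2
  simp only [hD0, one_smul] at hmul
  have hmul' : HasFDerivAt (fun w : E × ℂ => w.2 * D w) (ContinuousLinearMap.snd ℂ E ℂ) 0 := by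
    have e : (0 : E × ℂ).2 • fderiv ℂ D 0 + ContinuousLinearMap.snd ℂ E ℂ
        = ContinuousLinearMap.snd ℂ E ℂ := by
      ext x <;> simp
    rw [e] at hmul
    exact hmul
  have hfst : HasFDerivAt (fun w : E × ℂ => w.1) (ContinuousLinearMap.fst ℂ E ℂ) 0 :=
    (ContinuousLinearMap.fst ℂ E ℂ).hasFDerivAt
  have := hfst.prodMk hmul'
  rwa [ContinuousLinearMap.fst_prod_snd] at this

/-- The shear `w ↦ (w.1, w.2 * D w)` with `D` analytic, `D 0 = 1`, is a weak biholo germ. -/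
lemma shear_weak [NormedAddCommGroup E] [NormedSpace ℂ E]
    (D : E × ℂ → ℂ) (hD : AnalyticAt ℂ D 0) (hD0 : D 0 = 1) :
    IsWeakBiholoGerm (fun w : E × ℂ => (w.1, w.2 * D w)) := by
  have hana : AnalyticAt ℂ (fun w : E × ℂ => (w.1, w.2 * D w)) 0 :=
    analyticAt_fst.prod (analyticAt_snd.mul hD)
  refine ⟨⟨⟨hana, by simp⟩, ⟨ContinuousLinearEquiv.refl ℂ (E × ℂ), ?_⟩⟩,
    D, hD, by simpa using hD0 ▸ one_ne_zero, Eventually.of_forall fun w => rfl⟩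
  rw [(shear_hasFDerivAt D hD hD0).fderiv]
  rfl

/-- Local analytic inverse of the shear `w ↦ (w.1, w.2 * D w)`: a weak biholo germ `Φ`
with `(Φ w).1 = w.1` and `(Φ w).2 * D (Φ w) = w.2` near `0`. -/
lemma exists_weak_inverse [NormedAddCommGroup E] [NormedSpace ℂ E] [CompleteSpace E]
    (D : E × ℂ → ℂ) (hD : AnalyticAt ℂ D 0) (hD0 : D 0 = 1) :
    ∃ Φ : E × ℂ → E × ℂ, IsWeakBiholoGerm Φ ∧
      ∀ᶠ w in 𝓝 (0 : E × ℂ), (Φ w).1 = w.1 ∧ (Φ w).2 * D (Φ w) = w.2 := by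
  set φ : E × ℂ → E × ℂ := fun w => (w.1, w.2 * D w) with hφdef
  have hφ0 : φ 0 = 0 := by simp [hφdef]
  have hana : AnalyticAt ℂ φ 0 := analyticAt_fst.prod (analyticAt_snd.mul hD)
  have hFD : HasFDerivAt φ (ContinuousLinearMap.id ℂ (E × ℂ)) 0 :=
    shear_hasFDerivAt D hD hD0
  set i : (E × ℂ) ≃L[ℂ] (E × ℂ) := ContinuousLinearEquiv.refl ℂ (E × ℂ) with hidef
  have hstrict : HasStrictFDerivAt φ (i : (E × ℂ) →L[ℂ] (E × ℂ)) 0 := by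
    have := hana.hasStrictFDerivAt
    rwa [hFD.fderiv] at this
  set P : OpenPartialHomeomorph (E × ℂ) (E × ℂ) := hstrict.toOpenPartialHomeomorph φ with hPdef
  have hPcoe : (P : E × ℂ → E × ℂ) = φ := rfl
  have h0 : (0 : E × ℂ) ∈ P.source := hstrict.mem_toOpenPartialHomeomorph_source
  obtain ⟨p, hp⟩ := hana
  have hpP : HasFPowerSeriesAt (P : E × ℂ → E × ℂ) p 0 := by rwa [hPcoe]
  have hp1 : p 1 = (continuousMultilinearCurryFin1 ℂ (E × ℂ) (E × ℂ)).symm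
      (i : (E × ℂ) →L[ℂ] (E × ℂ)) := by
    have hu : continuousMultilinearCurryFin1 ℂ (E × ℂ) (E × ℂ) (p 1)
        = ContinuousLinearMap.id ℂ (E × ℂ) := hp.hasFDerivAt.unique hFD
    have hi : (i : (E × ℂ) →L[ℂ] (E × ℂ)) = ContinuousLinearMap.id ℂ (E × ℂ) := rfl
    rw [hi, ← hu, LinearIsometryEquiv.symm_apply_apply]
  have hsymm := P.hasFPowerSeriesAt_symm h0 hpP hp1
  rw [hPcoe, hφ0] at hsymm
  set Φ : E × ℂ → E × ℂ := fun w => P.symm w with hΦdef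
  have hΦana : AnalyticAt ℂ Φ 0 := ⟨_, hsymm⟩
  have hΦFD : HasFDerivAt Φ ((i.symm : (E × ℂ) →L[ℂ] (E × ℂ))) 0 := by
    have := hsymm.hasFDerivAt
    rwa [FormalMultilinearSeries.leftInv_coeff_one,
      LinearIsometryEquiv.apply_symm_apply] at this
  have hΦ0 : Φ 0 = 0 := by
    have := P.left_inv h0
    rw [hPcoe, hφ0] at this
    exact this
  -- the eventual right-inverse property
  have htarget : P.target ∈ 𝓝 (0 : E × ℂ) := by
    have h0t : (0 : E × ℂ) ∈ P.target := by
      have := P.map_source h0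
      rwa [hPcoe, hφ0] at this
    exact P.open_target.mem_nhds h0t
  have hright : ∀ᶠ w in 𝓝 (0 : E × ℂ), φ (Φ w) = w := by
    filter_upwards [htarget] with w hw
    have := P.right_inv hw
    rwa [hPcoe] at this
  have hev : ∀ᶠ w in 𝓝 (0 : E × ℂ), (Φ w).1 = w.1 ∧ (Φ w).2 * D (Φ w) = w.2 := by
    filter_upwards [hright] with w hw
    rw [Prod.ext_iff] at hw
    exact hw
  -- weakness
  have hDΦ : AnalyticAt ℂ (fun w => D (Φ w)) 0 := by
    have : AnalyticAt ℂ D (Φ 0) := by rwa [hΦ0]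
    exact this.comp hΦana
  have hDΦ0 : D (Φ 0) = 1 := by rw [hΦ0, hD0]
  have hne : ∀ᶠ w in 𝓝 (0 : E × ℂ), D (Φ w) ≠ 0 := by
    have hcont : ContinuousAt (fun w => D (Φ w)) 0 := hDΦ.continuousAt
    have : ∀ᶠ w in 𝓝 (0 : E × ℂ), D (Φ w) ∈ ({0}ᶜ : Set ℂ) := by
      apply hcont.eventually_mem
      simp only [hΦ0, hD0]
      exact isOpen_compl_singleton.mem_nhds (by norm_num)
    exact this
  refine ⟨Φ, ⟨⟨⟨hΦana, hΦ0⟩, ⟨i.symm, hΦFD.fderiv⟩⟩,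
    fun w => (D (Φ w))⁻¹, hDΦ.inv (by rw [hΦ0, hD0]; norm_num), ?_, ?_⟩, hev⟩
  · show (D (Φ 0))⁻¹ ≠ 0
    rw [hΦ0, hD0]
    norm_num
  · filter_upwards [hev, hne] with w hw hw'
    rw [eq_mul_inv_iff_mul_eq₀ hw']
    exact hw.2

/-- Proposition 6.3 of the paper (concrete form): with `p = p'+1`, `k = k'+1`, the
one-parameter unfolding
`F(x,λ) = (f₁(x),…,f_{p−1}(x), f_p(x) + (1 + Σᵢ qᵢ(λ)·sᵢ(f₁(x),…,f_{p−1}(x)))·λ·x^α, λ)`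
is weak equivalent to
`G(x,Λ) = (f₁(x),…,f_{p−1}(x), f_p(x) + Λ·x^α, Λ)`:
there are weak germs of biholomorphism `Φ`, `Ψ` with `Ψ ∘ F ∘ Φ = G` as germs. -/
theorem normal_form_weak_equivalent (n p' k' : ℕ)
    (f : (Fin n → ℂ) → (Fin (p' + 1) → ℂ)) (hf : IsMapGerm f)
    (α : Fin n → ℕ) (hα : α ≠ 0)
    (q : Fin k' → ℂ → ℂ) (hq : ∀ i, IsMapGerm (q i))
    (s : Fin k' → (Fin p' → ℂ) → ℂ) (hs : ∀ i, IsMapGerm (s i)) :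
    ∃ (Φ : (Fin n → ℂ) × ℂ → (Fin n → ℂ) × ℂ)
      (Ψ : (Fin (p' + 1) → ℂ) × ℂ → (Fin (p' + 1) → ℂ) × ℂ),
      IsWeakBiholoGerm Φ ∧ IsWeakBiholoGerm Ψ ∧
      (Ψ ∘ (fun w : (Fin n → ℂ) × ℂ =>
          (Function.update (f w.1) (Fin.last p')
            (f w.1 (Fin.last p') +
              (1 + ∑ i, q i w.2 * s i (fun j : Fin p' => f w.1 j.castSucc)) * w.2 *
                ∏ i, w.1 i ^ α i),
           w.2)) ∘ Φ)
        =ᶠ[𝓝 0]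
      (fun w : (Fin n → ℂ) × ℂ =>
          (Function.update (f w.1) (Fin.last p')
            (f w.1 (Fin.last p') + w.2 * ∏ i, w.1 i ^ α i),
           w.2)) := by
  -- the truncated map-germ `f̂`
  set fh : (Fin n → ℂ) → (Fin p' → ℂ) := fun x j => f x j.castSucc with hfhdef
  have hfh0 : fh 0 = 0 := by
    funext j
    simp [hfhdef, hf.2]
  have hfhana : AnalyticAt ℂ fh 0 :=
    AnalyticAt.pi fun j => ((ContinuousLinearMap.proj (R := ℂ)
      (φ := fun _ : Fin (p' + 1) => ℂ) j.castSucc).analyticAt (f 0)).comp hf.1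
  -- the multiplier in the source
  set D : (Fin n → ℂ) × ℂ → ℂ :=
    fun w => 1 + ∑ i, q i w.2 * s i (fh w.1) with hDdef
  have hDana : AnalyticAt ℂ D 0 := by
    apply analyticAt_const.add
    apply Finset.analyticAt_fun_sum
    intro i _
    have hqi : AnalyticAt ℂ (fun w : (Fin n → ℂ) × ℂ => q i w.2) 0 :=
      AnalyticAt.comp (g := q i) (f := Prod.snd) (hq i).1 analyticAt_snd
    have hfhw : AnalyticAt ℂ (fun w : (Fin n → ℂ) × ℂ => fh w.1) 0 :=
      AnalyticAt.comp (g := fh) (f := Prod.fst) hfhana analyticAt_fst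
    have hsi : AnalyticAt ℂ (s i) (fh ((0 : (Fin n → ℂ) × ℂ).1)) := by
      rw [show ((0 : (Fin n → ℂ) × ℂ).1) = 0 from rfl, hfh0]
      exact (hs i).1
    exact hqi.mul (AnalyticAt.comp (g := s i)
      (f := fun w : (Fin n → ℂ) × ℂ => fh w.1) hsi hfhw)
  have hD0 : D 0 = 1 := by
    simp [hDdef, (fun i => (hq i).2)]
  -- the multiplier in the target
  set Dψ : (Fin (p' + 1) → ℂ) × ℂ → ℂ :=
    fun w => 1 + ∑ i, q i w.2 * s i (fun j : Fin p' => w.1 j.castSucc) with hDψdef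
  have hDψana : AnalyticAt ℂ Dψ 0 := by
    apply analyticAt_const.add
    apply Finset.analyticAt_fun_sum
    intro i _
    have hqi : AnalyticAt ℂ (fun w : (Fin (p' + 1) → ℂ) × ℂ => q i w.2) 0 :=
      AnalyticAt.comp (g := q i) (f := Prod.snd) (hq i).1 analyticAt_snd
    have hproj : AnalyticAt ℂ
        (fun w : (Fin (p' + 1) → ℂ) × ℂ => fun j : Fin p' => w.1 j.castSucc) 0 :=
      AnalyticAt.pi fun j => ((ContinuousLinearMap.proj (R := ℂ)
        (φ := fun _ : Fin (p' + 1) => ℂ) j.castSucc).analyticAt _).comp (f := Prod.fst) analyticAt_fst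
    have hsi : AnalyticAt ℂ (s i)
        (fun j : Fin p' => ((0 : (Fin (p' + 1) → ℂ) × ℂ)).1 j.castSucc) := (hs i).1
    exact hqi.mul (AnalyticAt.comp (g := s i)
      (f := fun w : (Fin (p' + 1) → ℂ) × ℂ => fun j : Fin p' => w.1 j.castSucc) hsi hproj)
  have hDψ0 : Dψ 0 = 1 := by
    simp [hDψdef, (fun i => (hq i).2)]
  -- Φ : local inverse of the source shear, Ψ : the target shear
  obtain ⟨Φ, hΦweak, hΦev⟩ := exists_weak_inverse D hDana hD0
  refine ⟨Φ, fun w => (w.1, w.2 * Dψ w), hΦweak, shear_weak Dψ hDψana hDψ0, ?_⟩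
  filter_upwards [hΦev] with w hw
  obtain ⟨h1, h2⟩ := hw
  simp only [Function.comp_apply, hDdef, hfhdef, hDψdef] at h2 ⊢
  rw [h1] at h2 ⊢
  have hupd : ∀ (c : ℂ) (j : Fin p'),
      Function.update (f w.1) (Fin.last p') c j.castSucc = f w.1 j.castSucc :=
    fun c j => Function.update_of_ne (Fin.castSucc_lt_last j).ne _ _
  simp only [hupd]
  have h3 : (1 + ∑ i, q i (Φ w).2 * s i (fun j : Fin p' => f w.1 j.castSucc)) * (Φ w).2
      = w.2 := by rw [mul_comm]; exact h2
  rw [h3, h2]
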